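/- Algorithm defined by μ^{[t+1]} minimizing Σ_k λ_k^{[t+1]} u_k(μ) with λ_k^{[t+1]} = (∏_ℓ u_ℓ(μ^{[t]}))^{1/K}/u_k(μ^{[t]}) produces a non-increasing sequence of products ∏_k u_k(μ^{[t]}); since this product is bounded below by 0, the sequence of products converges. -/

import Mathlib

/-- The iterative power-allocation algorithm produces a non-increasing sequence of
products `∏ k, u k (μ t)`, which (being bounded below by 0) converges. -/
theorem stmt_6 (n K : ℕ) (hK : 0 < K)
    (C : Set (Fin n → ℝ))
    (u : Fin K → (Fin n → ℝ) → ℝ)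
    (hu : ∀ k x, 0 < u k x)
    (μ : ℕ → (Fin n → ℝ)) (hμC : ∀ t, μ t ∈ C)
    (hstep : ∀ t,
      ∑ k, ((∏ ℓ, u ℓ (μ t)) ^ ((K : ℝ)⁻¹) / u k (μ t)) * u k (μ (t + 1)) ≤
      ∑ k, ((∏ ℓ, u ℓ (μ t)) ^ ((K : ℝ)⁻¹) / u k (μ t)) * u k (μ t)) :
    Antitone (fun t => ∏ k, u k (μ t)) ∧
      ∃ L : ℝ, Filter.Tendsto (fun t => ∏ k, u k (μ t)) Filter.atTop (nhds L) := by
  have hK0 : (K : ℝ) ≠ 0 := Nat.cast_ne_zero.mpr hK.ne'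
  have hanti : Antitone (fun t => ∏ k, u k (μ t)) := by
    apply antitone_nat_of_succ_le
    intro t
    set P : ℝ := ∏ k, u k (μ t) with hPdef
    set Q : ℝ := ∏ k, u k (μ (t + 1)) with hQdef
    have hP : 0 < P := Finset.prod_pos fun k _ => hu k _
    have hQ : 0 < Q := Finset.prod_pos fun k _ => hu k _
    -- RHS of hstep equals K * P^{1/K}
    have hrhs : ∑ k, (P ^ ((K : ℝ)⁻¹) / u k (μ t)) * u k (μ t)
        = (K : ℝ) * P ^ ((K : ℝ)⁻¹) := by
      rw [Finset.sum_congr rfl (fun k _ => div_mul_cancel₀ _ (hu k (μ t)).ne')]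
      simp [mul_comm]
    set z : Fin K → ℝ := fun k => (P ^ ((K : ℝ)⁻¹) / u k (μ t)) * u k (μ (t + 1)) with hzdef
    have hz0 : ∀ k ∈ Finset.univ, (0:ℝ) ≤ z k := fun k _ =>
      mul_nonneg (div_nonneg (Real.rpow_nonneg hP.le _) (hu k (μ t)).le)
        (hu k (μ (t+1))).le
    have hamgm : ∏ k, z k ^ ((K : ℝ)⁻¹) ≤ ∑ k, ((K : ℝ)⁻¹) * z k :=
      Real.geom_mean_le_arith_mean_weighted Finset.univ _ z
        (fun _ _ => by positivity) (by rw [Finset.sum_const, Finset.card_univ, Fintype.card_fin, nsmul_eq_mul, mul_inv_cancel₀ hK0]) hz0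
    -- ∏ z = Q
    have hpow : (P ^ ((K : ℝ)⁻¹)) ^ (K : ℕ) = P := by
      rw [← Real.rpow_natCast (P ^ ((K : ℝ)⁻¹)) K, ← Real.rpow_mul hP.le,
        inv_mul_cancel₀ hK0, Real.rpow_one]
    have hprodz : ∏ k, z k = Q := by
      rw [hzdef]
      rw [Finset.prod_mul_distrib, Finset.prod_div_distrib, Finset.prod_const,
        Finset.card_univ, Fintype.card_fin, hpow, ← hPdef, ← hQdef,
        div_self hP.ne', one_mul]
    have h1 : ∏ k, z k ^ ((K : ℝ)⁻¹) = Q ^ ((K : ℝ)⁻¹) := by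
      rw [Real.finset_prod_rpow _ _ hz0, hprodz]
    have h2 : ∑ k, ((K : ℝ)⁻¹) * z k ≤ P ^ ((K : ℝ)⁻¹) := by
      rw [← Finset.mul_sum]
      calc (K : ℝ)⁻¹ * ∑ k, z k ≤ (K : ℝ)⁻¹ * ((K : ℝ) * P ^ ((K : ℝ)⁻¹)) := by
            apply mul_le_mul_of_nonneg_left _ (by positivity)
            rw [← hrhs]; exact hstep t
        _ = P ^ ((K : ℝ)⁻¹) := by field_simp
    have key : Q ^ ((K : ℝ)⁻¹) ≤ P ^ ((K : ℝ)⁻¹) := h1 ▸ hamgm.trans h2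
    have := Real.rpow_le_rpow (Real.rpow_nonneg hQ.le _) key (Nat.cast_nonneg K)
    rwa [← Real.rpow_mul hQ.le, ← Real.rpow_mul hP.le, inv_mul_cancel₀ hK0,
      Real.rpow_one, Real.rpow_one] at this
  refine ⟨hanti, ⟨⨅ t, ∏ k, u k (μ t), ?_⟩⟩
  apply tendsto_atTop_ciInf hanti
  exact ⟨0, fun x ⟨t, ht⟩ => ht ▸ (Finset.prod_pos fun k _ => hu k _).le⟩
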